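/- If G is a bipartite graph, then Q(G) is a Gorenstein Fano polytope: Q(G) is a lattice polytope (all its vertices lie in ℤ^d), the origin is the unique lattice point in the interior of Q(G), and the dual polytope Q(G)^∨ is a lattice polytope. -/

import Mathlib

open Set Pointwise

/-- The fractional stable set polytope `FRAC(G)` of a finite simple graph `G` on `Fin d`. -/
def FRAC (d : ℕ) (G : SimpleGraph (Fin d)) : Set (Fin d → ℝ) :=
  {x | (∀ i, 0 ≤ x i) ∧ ∀ i j, G.Adj i j → x i + x j ≤ 1}

/-- The polytope `Q(G) = 3·FRAC(G) − (1,…,1)`. -/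
def Qpoly (d : ℕ) (G : SimpleGraph (Fin d)) : Set (Fin d → ℝ) :=
  {x | (∀ i, -1 ≤ x i) ∧ ∀ i j, G.Adj i j → x i + x j ≤ 1}

/-- The number of lattice points of a subset of `ℝ^d`. -/
noncomputable def latticePts {d : ℕ} (s : Set (Fin d → ℝ)) : ℕ :=
  (s ∩ {x | ∀ i, ∃ z : ℤ, x i = (z : ℝ)}).ncard

/-- `π : Fin d → ℤ` is a signed permutation word on `[d] = {1,…,d}`:
each letter is one of `±1,…,±d` and the absolute values form a permutation of `1,…,d`. -/
def IsSignedPermWord (d : ℕ) (π : Fin d → ℤ) : Prop :=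
  (∀ p, 1 ≤ (π p).natAbs ∧ (π p).natAbs ≤ d) ∧
    Function.Injective fun p => (π p).natAbs

/-- The number of descents of a signed permutation word: position `i` (0-based) is a
descent if `i` is not the last position and `π i > π (i+1)`, or `i` is the last
position and `π i > 0`. -/
noncomputable def des {d : ℕ} (π : Fin d → ℤ) : ℕ :=
  Set.ncard {i : Fin d |
    (∃ h : (i : ℕ) + 1 < d, π ⟨(i : ℕ) + 1, h⟩ < π i) ∨ ((i : ℕ) + 1 = d ∧ 0 < π i)}

/-- Steingrímsson's set `Π(G)`: signed permutation words such that for every edge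
`(i,j)` of `G`, if the letter `+i` appears then the letter `−j` precedes it.
(Vertex `v : Fin d` corresponds to the letter `v+1`.) -/
def PiSet {d : ℕ} (G : SimpleGraph (Fin d)) : Set (Fin d → ℤ) :=
  {π | IsSignedPermWord d π ∧ ∀ i j : Fin d, G.Adj i j →
    ∀ p : Fin d, π p = ((i : ℕ) + 1 : ℤ) →
      ∃ q : Fin d, q < p ∧ π q = -(((j : ℕ) + 1 : ℤ))}

/-- The dual (polar) of a subset of `ℝ^d`. -/
def polarDual {d : ℕ} (P : Set (Fin d → ℝ)) : Set (Fin d → ℝ) :=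
  {x | ∀ y ∈ P, (∑ i, x i * y i) ≤ 1}

/-- The vertex set `{e_i + e_j : (i,j) ∈ E(G)} ∪ {−e_1,…,−e_d}` of the dual of `Q(G)`. -/
def Vset (d : ℕ) (G : SimpleGraph (Fin d)) : Set (Fin d → ℝ) :=
  {x | ∃ i j, G.Adj i j ∧ x = Pi.single i 1 + Pi.single j 1} ∪
    {x | ∃ i, x = -Pi.single i 1}

/-- The Eulerian number `A(k,i)`: the number of permutations of `{1,…,k}` with
exactly `i` descents. -/
noncomputable def eulerianNumber (k i : ℕ) : ℕ :=
  Set.ncard {σ : Equiv.Perm (Fin k) |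
    Set.ncard {j : Fin k | ∃ h : (j : ℕ) + 1 < k, σ ⟨(j : ℕ) + 1, h⟩ < σ j} = i}

/-- The configuration `A ⊂ ℤ^{d+1}` consisting of `(0,1)`, `(e_i+e_j,1)` for edges
`(i,j)`, and `(−e_i,1)`. -/
def Aset (d : ℕ) (G : SimpleGraph (Fin d)) : Set (Fin (d + 1) → ℤ) :=
  {a | a = Fin.snoc (0 : Fin d → ℤ) (1 : ℤ) ∨
    (∃ i j, G.Adj i j ∧ a = Fin.snoc (Pi.single i 1 + Pi.single j 1) (1 : ℤ)) ∨
    ∃ i, a = Fin.snoc (-Pi.single i 1) (1 : ℤ)}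

section AuxStmt8
variable {d : ℕ} {G : SimpleGraph (Fin d)}


lemma interior_strict {x : Fin d → ℝ} (hx : x ∈ interior (Qpoly d G)) :
    (∀ i, -1 < x i) ∧ ∀ i j, G.Adj i j → x i + x j < 1 := by
  obtain ⟨ε, hε, hball⟩ := Metric.mem_nhds_iff.1 (mem_interior_iff_mem_nhds.1 hx)
  constructor
  · intro i
    have hy : Function.update x i (x i - ε/2) ∈ Qpoly d G := by
      apply hball
      rw [Metric.mem_ball, dist_pi_lt_iff hε]
      intro b
      rcases eq_or_ne b i with rfl | hb
      · simp [Real.dist_eq]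
        rw [abs_of_nonneg (by linarith)]
        linarith
      · simp [Function.update_of_ne hb]
        exact hε
    have := hy.1 i
    simp [Function.update_self] at this
    linarith
  · intro i j hij
    have hne : j ≠ i := fun h => G.irrefl (h ▸ hij)
    have hy : Function.update x i (x i + ε/2) ∈ Qpoly d G := by
      apply hball
      rw [Metric.mem_ball, dist_pi_lt_iff hε]
      intro b
      rcases eq_or_ne b i with rfl | hb
      · simp [Real.dist_eq]
        rw [abs_of_nonneg (by linarith)]
        linarith
      · simp [Function.update_of_ne hb]
        exact hε
    have := hy.2 i j hij
    rw [Function.update_self, Function.update_of_ne hne] at this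
    linarith

lemma zero_mem_interior : (0 : Fin d → ℝ) ∈ interior (Qpoly d G) := by
  rw [mem_interior]
  refine ⟨Set.pi Set.univ (fun _ => Set.Ioo (-(1/2)) (1/2)), ?_, ?_, ?_⟩
  · intro x hx
    simp only [Set.mem_pi, Set.mem_univ, Set.mem_Ioo, forall_const] at hx
    constructor
    · intro i; linarith [(hx i).1]
    · intro i j _; linarith [(hx i).2, (hx j).2]
  · exact isOpen_set_pi Set.finite_univ (fun i _ => isOpen_Ioo)
  · simp

lemma part2 (hiso : ∀ i : Fin d, ∃ j, G.Adj i j) :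
    interior (Qpoly d G) ∩ {x : Fin d → ℝ | ∀ i, ∃ z : ℤ, x i = (z : ℝ)} = {0} := by
  ext x
  simp only [Set.mem_inter_iff, Set.mem_setOf_eq, Set.mem_singleton_iff]
  constructor
  · rintro ⟨hint, hlat⟩
    obtain ⟨hstrict1, hstrict2⟩ := interior_strict hint
    funext i
    obtain ⟨z, hz⟩ := hlat i
    obtain ⟨j, hij⟩ := hiso i
    obtain ⟨w, hw⟩ := hlat j
    have h1 : (-1 : ℝ) < (z : ℝ) := hz ▸ hstrict1 i
    have h2 : (-1 : ℝ) < (w : ℝ) := hw ▸ hstrict1 j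
    have h3 : (z : ℝ) + (w : ℝ) < 1 := by rw [← hz, ← hw]; exact hstrict2 i j hij
    have hz1 : (-1 : ℤ) < z := by exact_mod_cast h1
    have hw1 : (-1 : ℤ) < w := by exact_mod_cast h2
    have hzw : z + w < 1 := by exact_mod_cast h3
    have : z = 0 := by omega
    simp [hz, this]
  · rintro rfl
    exact ⟨zero_mem_interior, fun i => ⟨0, by simp⟩⟩


lemma part1 (hbip : G.Colorable 2)
    (v : Fin d → ℝ) (hv : v ∈ Set.extremePoints ℝ (Qpoly d G)) (i0 : Fin d) :
    ∃ z : ℤ, v i0 = (z : ℝ) := by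
  classical
  by_contra hno
  obtain ⟨hvQ, hext⟩ := mem_extremePoints.1 hv
  obtain ⟨C⟩ := hbip
  set F : Set (Fin d) := {i | ¬ ∃ z : ℤ, v i = (z : ℝ)} with hF
  have hi0F : i0 ∈ F := hno
  set σ : Fin d → ℝ := fun i => if i ∈ F then (if C i = 0 then 1 else -1) else 0 with hσ
  have hσ_abs : ∀ i, |σ i| ≤ 1 := by
    intro i; simp only [hσ]; split_ifs <;> simp
  have hσ_zero : ∀ i, i ∉ F → σ i = 0 := by
    intro i hi; simp only [hσ, if_neg hi]
  have hfin2 : ∀ a : Fin 2, a = 0 ∨ a = 1 := by decide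
  have hσ_cancel : ∀ i j, G.Adj i j → i ∈ F → j ∈ F → σ i + σ j = 0 := by
    intro i j hij hi hj
    have hcne : C i ≠ C j := C.valid hij
    simp only [hσ, if_pos hi, if_pos hj]
    rcases hfin2 (C i) with h0 | h1
    · have : C j ≠ 0 := fun h => hcne (h0.trans h.symm)
      rw [if_pos h0, if_neg this]; ring
    · have h0 : C i ≠ 0 := by rw [h1]; decide
      have : C j = 0 := by
        rcases hfin2 (C j) with h | h
        · exact h
        · exact absurd (h1.trans h.symm) hcne
      rw [if_neg h0, if_pos this]; ring
  -- fractional coordinates are strictly > -1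
  have hFgt : ∀ i ∈ F, -1 < v i := by
    intro i hi
    rcases lt_or_eq_of_le (hvQ.1 i) with h | h
    · exact h
    · exact absurd ⟨-1, by rw [← h]; norm_num⟩ hi
  -- edges with exactly one fractional endpoint are slack
  have hslack : ∀ i j, G.Adj i j → ¬(i ∈ F ↔ j ∈ F) → v i + v j < 1 := by
    intro i j hij hiff
    rcases lt_or_eq_of_le (hvQ.2 i j hij) with h | h
    · exact h
    · exfalso
      have : (i ∈ F ∧ j ∉ F) ∨ (i ∉ F ∧ j ∈ F) := by tauto
      rcases this with ⟨hi, hj⟩ | ⟨hi, hj⟩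
      · rw [hF, Set.mem_setOf_eq, not_not] at hj
        obtain ⟨w, hw⟩ := hj
        exact hi ⟨1 - w, by push_cast; linarith⟩
      · rw [hF, Set.mem_setOf_eq, not_not] at hi
        obtain ⟨w, hw⟩ := hi
        exact hj ⟨1 - w, by push_cast; linarith⟩
  -- define ε
  have hne : (Finset.univ : Finset (Fin d)).Nonempty := ⟨i0, Finset.mem_univ _⟩
  have hne2 : (Finset.univ : Finset (Fin d × Fin d)).Nonempty := ⟨(i0, i0), Finset.mem_univ _⟩
  set a : Fin d → ℝ := fun i => if i ∈ F then v i + 1 else 1 with ha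
  set b : Fin d × Fin d → ℝ :=
    fun p => if G.Adj p.1 p.2 ∧ ¬(p.1 ∈ F ↔ p.2 ∈ F) then 1 - v p.1 - v p.2 else 1 with hb
  set ε : ℝ := min (Finset.univ.inf' hne a) (Finset.univ.inf' hne2 b) with hε
  have hεpos : 0 < ε := by
    rw [hε, lt_min_iff]
    constructor
    · rw [Finset.lt_inf'_iff]
      intro i _
      simp only [ha]
      split_ifs with hi
      · linarith [hFgt i hi]
      · norm_num
    · rw [Finset.lt_inf'_iff]
      intro p _
      simp only [hb]
      split_ifs with hp
      · linarith [hslack p.1 p.2 hp.1 hp.2]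
      · norm_num
  have hεa : ∀ i ∈ F, ε ≤ v i + 1 := by
    intro i hi
    calc ε ≤ Finset.univ.inf' hne a := min_le_left _ _
      _ ≤ a i := Finset.inf'_le _ (Finset.mem_univ i)
      _ = v i + 1 := by simp only [ha, if_pos hi]
  have hεb : ∀ i j, G.Adj i j → ¬(i ∈ F ↔ j ∈ F) → ε ≤ 1 - v i - v j := by
    intro i j hij hiff
    calc ε ≤ Finset.univ.inf' hne2 b := min_le_right _ _
      _ ≤ b (i, j) := Finset.inf'_le _ (Finset.mem_univ _)
      _ = 1 - v i - v j := by simp only [hb]; rw [if_pos ⟨hij, hiff⟩]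
  -- key perturbation lemma
  have key : ∀ t : ℝ, |t| ≤ ε → v + t • σ ∈ Qpoly d G := by
    intro t ht
    have habs : ∀ k, |t * σ k| ≤ ε := by
      intro k
      rw [abs_mul]
      calc |t| * |σ k| ≤ ε * 1 :=
        mul_le_mul ht (hσ_abs k) (abs_nonneg _) (le_trans (abs_nonneg t) ht)
        _ = ε := mul_one _
    constructor
    · intro i
      show -1 ≤ v i + t * σ i
      by_cases hi : i ∈ F
      · have h1 := neg_abs_le (t * σ i)
        have h2 := habs i
        have h3 := hεa i hi
        linarith
      · simp only [hσ_zero i hi, mul_zero, add_zero]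
        exact hvQ.1 i
    · intro i j hij
      show v i + t * σ i + (v j + t * σ j) ≤ 1
      by_cases hiff : i ∈ F ↔ j ∈ F
      · by_cases hi : i ∈ F
        · have hj := hiff.1 hi
          have hc := hσ_cancel i j hij hi hj
          have h2 := hvQ.2 i j hij
          have : t * σ i + t * σ j = t * (σ i + σ j) := by ring
          rw [hc, mul_zero] at this
          linarith
        · have hj : j ∉ F := fun h => hi (hiff.2 h)
          simp only [hσ_zero i hi, hσ_zero j hj, mul_zero, add_zero]
          exact hvQ.2 i j hij
      · have hbnd := hεb i j hij hiff
        have : (i ∈ F ∧ j ∉ F) ∨ (i ∉ F ∧ j ∈ F) := by tauto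
        rcases this with ⟨_, hj⟩ | ⟨hi, _⟩
        · simp only [hσ_zero j hj, mul_zero, add_zero]
          have h1 := le_abs_self (t * σ i)
          have h2 := habs i
          linarith
        · simp only [hσ_zero i hi, mul_zero, add_zero]
          have h1 := le_abs_self (t * σ j)
          have h2 := habs j
          linarith
  have hy1 := key ε (by rw [abs_of_pos hεpos])
  have hy2 := key (-ε) (by rw [abs_neg, abs_of_pos hεpos])
  have hmem : v ∈ openSegment ℝ (v + ε • σ) (v + (-ε) • σ) := by
    refine ⟨1/2, 1/2, by norm_num, by norm_num, by norm_num, ?_⟩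
    funext k
    simp only [Pi.add_apply, Pi.smul_apply, smul_eq_mul]
    ring
  have heq := (hext _ hy1 _ hy2 hmem).1
  have : ε * σ i0 = 0 := by
    have := congrFun heq i0
    simp only [Pi.add_apply, Pi.smul_apply, smul_eq_mul] at this
    linarith
  have hσi0 : σ i0 ≠ 0 := by
    simp only [hσ, if_pos hi0F]
    split_ifs <;> norm_num
  exact hσi0 (by
    rcases mul_eq_zero.1 this with h | h
    · exact absurd h (ne_of_gt hεpos)
    · exact h)




lemma sum_single_pair (y : Fin d → ℝ) (i j : Fin d) :
    ∑ k, (Pi.single i 1 + Pi.single j 1 : Fin d → ℝ) k * y k = y i + y j := by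
  classical
  simp only [Pi.add_apply, add_mul]
  rw [Finset.sum_add_distrib]
  congr 1
  · rw [Finset.sum_eq_single i]
    · simp
    · intro k _ hk; simp [Pi.single_apply, hk]
    · intro h; exact absurd (Finset.mem_univ i) h
  · rw [Finset.sum_eq_single j]
    · simp
    · intro k _ hk; simp [Pi.single_apply, hk]
    · intro h; exact absurd (Finset.mem_univ j) h

lemma sum_single_neg (y : Fin d → ℝ) (i : Fin d) :
    ∑ k, (-Pi.single i 1 : Fin d → ℝ) k * y k = -y i := by
  classical
  simp only [Pi.neg_apply, neg_mul]
  rw [Finset.sum_neg_distrib, neg_inj]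
  rw [Finset.sum_eq_single i]
  · simp
  · intro k _ hk; simp [Pi.single_apply, hk]
  · intro h; exact absurd (Finset.mem_univ i) h

lemma Vset_finite : (Vset d G).Finite := by
  apply Set.Finite.union
  · apply Set.Finite.subset (Set.finite_range
      (fun p : Fin d × Fin d => (Pi.single p.1 1 + Pi.single p.2 1 : Fin d → ℝ)))
    rintro x ⟨i, j, _, rfl⟩
    exact ⟨(i, j), rfl⟩
  · apply Set.Finite.subset (Set.finite_range (fun i : Fin d => (-Pi.single i 1 : Fin d → ℝ)))
    rintro x ⟨i, rfl⟩
    exact ⟨i, rfl⟩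

lemma Vset_subset_dual : Vset d G ⊆ polarDual (Qpoly d G) := by
  rintro x (⟨i, j, hij, rfl⟩ | ⟨i, rfl⟩) y hy
  · rw [sum_single_pair]
    exact hy.2 i j hij
  · rw [sum_single_neg]
    linarith [hy.1 i]

lemma dual_convex : Convex ℝ (polarDual (Qpoly d G)) := by
  intro x hx y hy s t hs ht hst z hz
  have h1 := hx z hz
  have h2 := hy z hz
  have : ∑ i, (s • x + t • y) i * z i = s * ∑ i, x i * z i + t * ∑ i, y i * z i := by
    simp only [Pi.add_apply, Pi.smul_apply, smul_eq_mul, add_mul, Finset.mul_sum]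
    rw [Finset.sum_add_distrib]
    ring_nf
  rw [this]
  nlinarith

lemma single_eq_smul (i : Fin d) (c : ℝ) : Pi.single i c = c • (Pi.single i 1 : Fin d → ℝ) := by
  funext k
  simp only [Pi.smul_apply, smul_eq_mul, Pi.single_apply]
  split_ifs <;> ring

lemma zero_mem_hull (hd : 1 ≤ d) (hiso : ∀ i : Fin d, ∃ j, G.Adj i j) :
    (0 : Fin d → ℝ) ∈ convexHull ℝ (Vset d G) := by
  obtain ⟨j, hij⟩ := hiso ⟨0, hd⟩
  set i : Fin d := ⟨0, hd⟩
  have hK : Convex ℝ (convexHull ℝ (Vset d G)) := convex_convexHull ℝ _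
  have hp1 : (Pi.single i 1 + Pi.single j 1 : Fin d → ℝ) ∈ convexHull ℝ (Vset d G) :=
    subset_convexHull ℝ _ (Or.inl ⟨i, j, hij, rfl⟩)
  have hp2 : (-Pi.single i 1 : Fin d → ℝ) ∈ convexHull ℝ (Vset d G) :=
    subset_convexHull ℝ _ (Or.inr ⟨i, rfl⟩)
  have hp3 : (-Pi.single j 1 : Fin d → ℝ) ∈ convexHull ℝ (Vset d G) :=
    subset_convexHull ℝ _ (Or.inr ⟨j, rfl⟩)
  have hq : (1/2 : ℝ) • (-Pi.single i 1 : Fin d → ℝ) + (1/2 : ℝ) • (-Pi.single j 1 : Fin d → ℝ)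
      ∈ convexHull ℝ (Vset d G) :=
    hK hp2 hp3 (by norm_num : (0:ℝ) ≤ 1/2) (by norm_num : (0:ℝ) ≤ 1/2) (by norm_num)
  have hfin := hK hp1 hq (le_of_lt (by norm_num : (0:ℝ) < 1/3))
    (le_of_lt (by norm_num : (0:ℝ) < 2/3)) (by norm_num)
  convert hfin using 1
  funext k
  simp only [Pi.add_apply, Pi.smul_apply, Pi.neg_apply, smul_eq_mul, Pi.zero_apply]
  ring

lemma dual_subset (hd : 1 ≤ d) (hiso : ∀ i : Fin d, ∃ j, G.Adj i j) :
    polarDual (Qpoly d G) ⊆ convexHull ℝ (Vset d G) := by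
  classical
  intro x hx
  by_contra hxK
  have hKc : IsClosed (convexHull ℝ (Vset d G)) :=
    (Set.Finite.isCompact_convexHull ℝ Vset_finite).isClosed
  obtain ⟨f, u, hfu, hux⟩ :=
    geometric_hahn_banach_closed_point (convex_convexHull ℝ _) hKc hxK
  have hu : (0 : ℝ) < u := by
    have := hfu 0 (zero_mem_hull hd hiso)
    simpa using this
  set g : Fin d → ℝ := fun i => f (Pi.single i 1) with hg
  have hfval : ∀ w : Fin d → ℝ, f w = ∑ i, w i * g i := by
    intro w
    conv_lhs => rw [← Finset.univ_sum_single w]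
    rw [map_sum]
    apply Finset.sum_congr rfl
    intro i _
    rw [single_eq_smul, map_smul, smul_eq_mul]
  set z : Fin d → ℝ := fun i => u⁻¹ * g i with hz
  have hzQ : z ∈ Qpoly d G := by
    constructor
    · intro i
      have hmem : (-Pi.single i 1 : Fin d → ℝ) ∈ convexHull ℝ (Vset d G) :=
        subset_convexHull ℝ _ (Or.inr ⟨i, rfl⟩)
      have hlt : f (-Pi.single i 1) < u := hfu _ hmem
      rw [map_neg] at hlt
      have : -u < g i := by
        simp only [hg]
        linarith
      have h2 : u⁻¹ * (-u) < u⁻¹ * g i := by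
        apply mul_lt_mul_of_pos_left this (inv_pos.2 hu)
      rw [inv_mul_eq_div, neg_div, div_self (ne_of_gt hu)] at h2
      simp only [hz]
      linarith
    · intro i j hij
      have hmem : (Pi.single i 1 + Pi.single j 1 : Fin d → ℝ) ∈ convexHull ℝ (Vset d G) :=
        subset_convexHull ℝ _ (Or.inl ⟨i, j, hij, rfl⟩)
      have hlt : f (Pi.single i 1 + Pi.single j 1) < u := hfu _ hmem
      rw [map_add] at hlt
      have hgij : g i + g j < u := hlt
      have h2 : u⁻¹ * (g i + g j) < u⁻¹ * u :=
        mul_lt_mul_of_pos_left hgij (inv_pos.2 hu)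
      rw [inv_mul_cancel₀ (ne_of_gt hu)] at h2
      simp only [hz]
      linarith
  have hle := hx z hzQ
  have hsum : ∑ i, x i * z i = u⁻¹ * f x := by
    rw [hfval x, Finset.mul_sum]
    apply Finset.sum_congr rfl
    intro i _
    simp only [hz]
    ring
  rw [hsum] at hle
  have : u⁻¹ * u < u⁻¹ * f x := mul_lt_mul_of_pos_left hux (inv_pos.2 hu)
  rw [inv_mul_cancel₀ (ne_of_gt hu)] at this
  linarith



end AuxStmt8

/-- if `G` is bipartite then `Q(G)` is a Gorenstein Fano polytope:
`Q(G)` is a lattice polytope, the origin is the unique interior lattice point,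
and the dual polytope is a lattice polytope. -/


theorem stmt8 (d : ℕ) (hd : 1 ≤ d) (G : SimpleGraph (Fin d))
    (hiso : ∀ i : Fin d, ∃ j, G.Adj i j) (hbip : G.Colorable 2) :
    (∀ v ∈ Set.extremePoints ℝ (Qpoly d G), ∀ i, ∃ z : ℤ, v i = (z : ℝ)) ∧
    interior (Qpoly d G) ∩ {x : Fin d → ℝ | ∀ i, ∃ z : ℤ, x i = (z : ℝ)} = {0} ∧
    ∀ v ∈ Set.extremePoints ℝ (polarDual (Qpoly d G)), ∀ i, ∃ z : ℤ, v i = (z : ℝ) := by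
  refine ⟨fun v hv i => part1 hbip v hv i, part2 hiso, ?_⟩
  intro v hv i
  have heq : polarDual (Qpoly d G) = convexHull ℝ (Vset d G) :=
    le_antisymm (dual_subset hd hiso) (convexHull_min Vset_subset_dual dual_convex)
  rw [heq] at hv
  have hvV := extremePoints_convexHull_subset hv
  rcases hvV with ⟨a, b, hab, rfl⟩ | ⟨a, rfl⟩
  · refine ⟨(if i = a then 1 else 0) + (if i = b then 1 else 0), ?_⟩
    simp only [Pi.add_apply, Pi.single_apply]
    split_ifs <;> norm_num
  · refine ⟨-(if i = a then 1 else 0), ?_⟩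
    simp only [Pi.neg_apply, Pi.single_apply]
    split_ifs <;> norm_num
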